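/- If J is any nontrivial ideal of the Onsager algebra O = O_A ⊕ O_G (where O_A = span{A_m} and O_G = span{G_l}), then J ∩ O_A ≠ {0}. -/

import Mathlib

/-- If `J` is any nontrivial ideal of the Onsager algebra `O = O_A ⊕ O_G`
(where `O_A = span{A_m}` and `O_G = span{G_l}`), then `J ∩ O_A ≠ {0}`. -/
theorem stmt_17 {k : Type*} [Field k] [CharZero k]
    {O : Type*} [LieRing O] [LieAlgebra k O]
    (A G : ℤ → O)
    (bas : Module.Basis (ℤ ⊕ {l : ℤ // 0 < l}) k O)
    (hbas : ∀ i, bas i = Sum.elim A (fun l => G l.1) i)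
    (hG0 : G 0 = 0) (hGneg : ∀ m : ℤ, G (-m) = -G m)
    (hAA : ∀ l m : ℤ, m < l → ⁅A l, A m⁆ = (2 : k) • G (l - m))
    (hGA : ∀ l m : ℤ, 0 < l → ⁅G l, A m⁆ = A (m + l) - A (m - l))
    (hGG : ∀ l m : ℤ, 0 < l → 0 < m → ⁅G l, G m⁆ = 0)
    (J : LieIdeal k O) (hJ : J ≠ ⊥) :
    ∃ x : O, x ∈ J ∧ x ∈ Submodule.span k (Set.range A) ∧ x ≠ 0 := by
  classical
  obtain ⟨x, hxJ, hx0⟩ : ∃ x, x ∈ J ∧ x ≠ 0 := by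
    by_contra h
    push_neg at h
    exact hJ ((LieSubmodule.eq_bot_iff J).mpr fun m hm => h m hm)
  set c := bas.repr x with hc
  have key : ∀ z : O, ⁅z, x⁆ = c.sum fun i a => a • ⁅z, bas i⁆ := by
    intro z
    conv_lhs => rw [← bas.linearCombination_repr x, Finsupp.linearCombination_apply]
    rw [← LieAlgebra.ad_apply (R := k), map_finsuppSum]
    simp [LieAlgebra.ad_apply, ← hc]
  have keyr : ∀ (z : O) (j), bas.repr ⁅z, x⁆ j
      = c.sum fun i a => a * bas.repr ⁅z, bas i⁆ j := by
    intro z j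
    rw [key z, map_finsuppSum, Finsupp.sum_apply]
    simp [Finsupp.sum, map_smul]
  have hsupp : ∀ p, (if p ∈ c.support then c p else 0) = c p := by
    intro p
    split_ifs with h
    · rfl
    · exact (Finsupp.notMem_support_iff.mp h).symm
  by_cases hcase : ∀ m : ℤ, c (Sum.inl m) = 0
  · -- x lies in the G-part
    obtain ⟨l₀, hl₀⟩ : ∃ l : {l : ℤ // 0 < l}, c (Sum.inr l) ≠ 0 := by
      by_contra h
      push_neg at h
      have hczero : c = 0 := by
        ext i
        cases i with
        | inl m => simpa using hcase m
        | inr l => simpa using h l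
      exact hx0 (bas.repr.map_eq_zero_iff.mp hczero)
    -- the bracket with A 0
    have hbr : ∀ l : {l : ℤ // 0 < l},
        ⁅A 0, bas (Sum.inr l)⁆ = A (0 - l.1) - A (0 + l.1) := by
      intro l
      simp only [hbas, Sum.elim_inr]
      rw [← lie_skew, hGA l.1 0 l.2, neg_sub]
    refine ⟨⁅A 0, x⁆, J.lie_mem hxJ, ?_, ?_⟩
    · rw [key (A 0), Finsupp.sum]
      refine Submodule.sum_mem _ fun i hi => ?_
      cases i with
      | inl m =>
        rw [hcase m, zero_smul]
        exact Submodule.zero_mem _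
      | inr l =>
        rw [hbr l]
        exact Submodule.smul_mem _ _ (sub_mem
          (Submodule.subset_span ⟨0 - l.1, rfl⟩)
          (Submodule.subset_span ⟨0 + l.1, rfl⟩))
    · intro h0
      have hval : ∀ i ∈ c.support, c i * bas.repr ⁅A 0, bas i⁆ (Sum.inl l₀.1)
          = -(if i = Sum.inr l₀ then c i else 0) := by
        intro i _
        cases i with
        | inl m => simp [hcase m]
        | inr l =>
          rw [hbr l]
          have e1 : A (0 - l.1) = bas (Sum.inl (0 - l.1)) := (hbas (Sum.inl (0 - l.1))).symm
          have e2 : A (0 + l.1) = bas (Sum.inl (0 + l.1)) := (hbas (Sum.inl (0 + l.1))).symm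
          rw [e1, e2, map_sub, bas.repr_self, bas.repr_self, Finsupp.sub_apply,
            Finsupp.single_apply, Finsupp.single_apply]
          have h1 : ¬ (Sum.inl (0 - l.1) = (Sum.inl l₀.1 : ℤ ⊕ {l : ℤ // 0 < l})) := by
            simp only [Sum.inl.injEq]
            have := l.2; have := l₀.2; omega
          have h2 : (Sum.inl (0 + l.1) = (Sum.inl l₀.1 : ℤ ⊕ {l : ℤ // 0 < l}))
              ↔ (Sum.inr l = (Sum.inr l₀ : ℤ ⊕ {l : ℤ // 0 < l})) := by
            simp [Sum.inl.injEq, Sum.inr.injEq, Subtype.ext_iff]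
          rw [if_neg h1, if_congr h2 rfl rfl]
          split_ifs <;> ring
      have hsum := keyr (A 0) (Sum.inl l₀.1)
      rw [h0, map_zero, Finsupp.zero_apply, Finsupp.sum,
        Finset.sum_congr rfl hval, Finset.sum_neg_distrib,
        Finset.sum_ite_eq' c.support (Sum.inr l₀) (fun i => c i), hsupp] at hsum
      exact hl₀ (neg_eq_zero.mp hsum.symm)
  · -- x has a nonzero A-coefficient
    push_neg at hcase
    obtain ⟨m₀, hm₀⟩ := hcase
    have hbrA : ∀ m : ℤ, ⁅G 1, bas (Sum.inl m)⁆
        = bas (Sum.inl (m + 1)) - bas (Sum.inl (m - 1)) := by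
      intro m
      simp only [hbas, Sum.elim_inl]
      exact hGA 1 m one_pos
    refine ⟨⁅G 1, x⁆, J.lie_mem hxJ, ?_, ?_⟩
    · rw [key (G 1), Finsupp.sum]
      refine Submodule.sum_mem _ fun i hi => ?_
      cases i with
      | inl m =>
        rw [hbrA m]
        simp only [hbas, Sum.elim_inl]
        exact Submodule.smul_mem _ _ (sub_mem
          (Submodule.subset_span ⟨m + 1, rfl⟩)
          (Submodule.subset_span ⟨m - 1, rfl⟩))
      | inr l =>
        simp only [hbas, Sum.elim_inr]
        rw [hGG 1 l.1 one_pos l.2, smul_zero]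
        exact Submodule.zero_mem _
    · intro h0
      have hval : ∀ n : ℤ, ∀ i, bas.repr ⁅G 1, bas i⁆ (Sum.inl n)
          = (if i = Sum.inl (n - 1) then (1 : k) else 0)
            - (if i = Sum.inl (n + 1) then (1 : k) else 0) := by
        intro n i
        cases i with
        | inl m =>
          rw [hbrA m, map_sub, bas.repr_self, bas.repr_self, Finsupp.sub_apply,
            Finsupp.single_apply, Finsupp.single_apply]
          have h1 : (Sum.inl (m + 1) = (Sum.inl n : ℤ ⊕ {l : ℤ // 0 < l}))
              ↔ (Sum.inl m = (Sum.inl (n - 1) : ℤ ⊕ {l : ℤ // 0 < l})) := by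
            simp only [Sum.inl.injEq]; omega
          have h2 : (Sum.inl (m - 1) = (Sum.inl n : ℤ ⊕ {l : ℤ // 0 < l}))
              ↔ (Sum.inl m = (Sum.inl (n + 1) : ℤ ⊕ {l : ℤ // 0 < l})) := by
            simp only [Sum.inl.injEq]; omega
          rw [if_congr h1 rfl rfl, if_congr h2 rfl rfl]
        | inr l =>
          simp only [hbas, Sum.elim_inr]
          rw [hGG 1 l.1 one_pos l.2, map_zero, Finsupp.zero_apply]
          simp
      have hrec : ∀ n : ℤ, c (Sum.inl (n - 1)) - c (Sum.inl (n + 1)) = 0 := by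
        intro n
        have hsum := keyr (G 1) (Sum.inl n)
        rw [h0, map_zero, Finsupp.zero_apply, Finsupp.sum] at hsum
        have : ∑ i ∈ c.support, c i * bas.repr ⁅G 1, bas i⁆ (Sum.inl n)
            = c (Sum.inl (n - 1)) - c (Sum.inl (n + 1)) := by
          simp only [hval n, mul_sub, mul_ite, mul_one, mul_zero]
          rw [Finset.sum_sub_distrib,
            Finset.sum_ite_eq' c.support (Sum.inl (n - 1)) (fun i => c i),
            Finset.sum_ite_eq' c.support (Sum.inl (n + 1)) (fun i => c i),
            hsupp, hsupp]
        rw [this] at hsum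
        exact hsum.symm
      have hstep : ∀ m : ℤ, c (Sum.inl m) = c (Sum.inl (m + 2)) := by
        intro m
        have := hrec (m + 1)
        rw [show m + 1 - 1 = m by ring, show m + 1 + 1 = m + 2 by ring] at this
        exact sub_eq_zero.mp this
      have hiter : ∀ N : ℕ, c (Sum.inl m₀) = c (Sum.inl (m₀ + 2 * (N : ℤ))) := by
        intro N
        induction N with
        | zero => norm_num
        | succ n ih =>
          rw [ih, hstep (m₀ + 2 * (n : ℤ))]
          congr 2
          push_cast
          ring
      have hinf : (Set.range fun N : ℕ =>
          (Sum.inl (m₀ + 2 * (N : ℤ)) : ℤ ⊕ {l : ℤ // 0 < l})).Infinite := by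
        apply Set.infinite_range_of_injective
        intro a b hab
        simp only [Sum.inl.injEq] at hab
        omega
      obtain ⟨_, ⟨N, rfl⟩, hN⟩ := hinf.exists_notMem_finset c.support
      exact hm₀ (by rw [hiter N, Finsupp.notMem_support_iff.mp hN])
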